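/- Let H' be a finitely generated group with finite generating set S' and identity e, let H := H' × ℤ × ℤ and S := {(s', 0, 0) | s' ∈ S'} ∪ {(e, 1, 0), (e, 0, 1)}. Then the Cayley graph Cay_S(H) is one-ended: its space of ends has exactly one element. -/

import Mathlib

/-- The Cayley graph of a group `H` with respect to a subset `S`: the simple graph on
vertex set `H` in which distinct vertices `x`, `y` are adjacent iff `x⁻¹ * y ∈ S ∪ S⁻¹`. -/
def cayleyGraph (H : Type*) [Group H] (S : Set H) : SimpleGraph H where
  Adj x y := x ≠ y ∧ x⁻¹ * y ∈ S ∪ S⁻¹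
  symm := by
    constructor
    rintro x y ⟨hne, h⟩
    refine ⟨hne.symm, ?_⟩
    have : y⁻¹ * x = (x⁻¹ * y)⁻¹ := by group
    rw [this]
    rcases h with h | h
    · exact Set.mem_union_right _ (Set.inv_mem_inv.mpr h)
    · exact Set.mem_union_left _ (by simpa using h)
  loopless := ⟨fun x h => h.1 rfl⟩

namespace CayleyOneEndedAux

open SimpleGraph Multiplicative

variable {H' : Type*} [Group H'] {S' : Set H'}

private abbrev VV (H' : Type*) := H' × Multiplicative ℤ × Multiplicative ℤ

private abbrev SS (S' : Set H') : Set (VV H') :=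
  {p : H' × Multiplicative ℤ × Multiplicative ℤ |
      ∃ s' ∈ S', p = (s', Multiplicative.ofAdd 0, Multiplicative.ofAdd 0)} ∪
    {(1, Multiplicative.ofAdd 1, Multiplicative.ofAdd 0),
     (1, Multiplicative.ofAdd 0, Multiplicative.ofAdd 1)}

private abbrev GG (S' : Set H') : SimpleGraph (VV H') := cayleyGraph _ (SS S')

private lemma adj_a (h : H') (a b : Multiplicative ℤ) :
    (GG S').Adj (h, a, b) (h, a * ofAdd 1, b) := by
  constructor
  · simp [Prod.ext_iff]
  · refine Or.inl (Or.inr (Or.inl ?_))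
    simp [Prod.ext_iff]

private lemma adj_b (h : H') (a b : Multiplicative ℤ) :
    (GG S').Adj (h, a, b) (h, a, b * ofAdd 1) := by
  constructor
  · simp [Prod.ext_iff]
  · refine Or.inl (Or.inr (Or.inr ?_))
    simp [Prod.ext_iff]

private lemma reach_a (Ω : Set (VV H')) (h : H') (b : Multiplicative ℤ)
    (hΩ : ∀ t, (h, t, b) ∈ Ω) (a a' : Multiplicative ℤ) :
    ((GG S').induce Ω).Reachable ⟨(h, a, b), hΩ a⟩ ⟨(h, a', b), hΩ a'⟩ := by
  suffices key : ∀ (d : ℤ) (c : Multiplicative ℤ),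
      ((GG S').induce Ω).Reachable ⟨(h, c, b), hΩ c⟩ ⟨(h, c * ofAdd d, b), hΩ _⟩ by
    have h1 := key (toAdd a' - toAdd a) a
    have : a * ofAdd (toAdd a' - toAdd a) = a' := by
      apply toAdd.injective; simp
    rwa [this] at h1
  intro d
  induction d using Int.induction_on with
  | zero =>
    intro c
    have : c * ofAdd (0 : ℤ) = c := by apply toAdd.injective; simp
    rw [this]
  | succ k ih =>
    intro c
    refine (ih c).trans ?_
    have : c * ofAdd ((k : ℤ) + 1) = c * ofAdd (k : ℤ) * ofAdd 1 := by
      apply toAdd.injective; simp; ring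
    rw [this]
    exact (Adj.reachable (by exact adj_a h (c * ofAdd (k : ℤ)) b))
  | pred k ih =>
    intro c
    refine (ih c).trans (Reachable.symm ?_)
    have : c * ofAdd (-(k : ℤ)) = c * ofAdd (-(k : ℤ) - 1) * ofAdd 1 := by
      apply toAdd.injective; simp; ring
    rw [this]
    exact (Adj.reachable (by exact adj_a h (c * ofAdd (-(k : ℤ) - 1)) b))

private lemma reach_b (Ω : Set (VV H')) (h : H') (a : Multiplicative ℤ)
    (hΩ : ∀ t, (h, a, t) ∈ Ω) (b b' : Multiplicative ℤ) :
    ((GG S').induce Ω).Reachable ⟨(h, a, b), hΩ b⟩ ⟨(h, a, b'), hΩ b'⟩ := by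
  suffices key : ∀ (d : ℤ) (c : Multiplicative ℤ),
      ((GG S').induce Ω).Reachable ⟨(h, a, c), hΩ c⟩ ⟨(h, a, c * ofAdd d), hΩ _⟩ by
    have h1 := key (toAdd b' - toAdd b) b
    have : b * ofAdd (toAdd b' - toAdd b) = b' := by
      apply toAdd.injective; simp
    rwa [this] at h1
  intro d
  induction d using Int.induction_on with
  | zero =>
    intro c
    have : c * ofAdd (0 : ℤ) = c := by apply toAdd.injective; simp
    rw [this]
  | succ k ih =>
    intro c
    refine (ih c).trans ?_
    have : c * ofAdd ((k : ℤ) + 1) = c * ofAdd (k : ℤ) * ofAdd 1 := by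
      apply toAdd.injective; simp; ring
    rw [this]
    exact (Adj.reachable (by exact adj_b h a (c * ofAdd (k : ℤ))))
  | pred k ih =>
    intro c
    refine (ih c).trans (Reachable.symm ?_)
    have : c * ofAdd (-(k : ℤ)) = c * ofAdd (-(k : ℤ) - 1) * ofAdd 1 := by
      apply toAdd.injective; simp; ring
    rw [this]
    exact (Adj.reachable (by exact adj_b h a (c * ofAdd (-(k : ℤ) - 1))))

private lemma reach_h (hgen : Subgroup.closure S' = ⊤) (Ω : Set (VV H'))
    (a b : Multiplicative ℤ) (hΩ : ∀ x : H', (x, a, b) ∈ Ω) (g : H') :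
    ∀ x : H', ((GG S').induce Ω).Reachable ⟨(x, a, b), hΩ x⟩ ⟨(x * g, a, b), hΩ _⟩ := by
  have hg : g ∈ Subgroup.closure S' := hgen ▸ Subgroup.mem_top g
  induction hg using Subgroup.closure_induction with
  | mem s hs =>
    intro x
    by_cases hxs : x * s = x
    · rw [show (⟨(x * s, a, b), hΩ _⟩ : Ω) = ⟨(x, a, b), hΩ x⟩ from Subtype.ext (by rw [hxs])]
    · refine Adj.reachable ?_
      show (GG S').Adj (x, a, b) (x * s, a, b)
      constructor
      · simp [Prod.ext_iff]; intro h; exact (hxs (by rw [h, mul_one])).elim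
      · refine Or.inl (Or.inl ⟨s, hs, ?_⟩)
        simp [Prod.ext_iff]
  | one =>
    intro x
    rw [show (⟨(x * 1, a, b), hΩ _⟩ : Ω) = ⟨(x, a, b), hΩ x⟩ from Subtype.ext (by rw [mul_one])]
  | mul y z _ _ hy hz =>
    intro x
    have := (hy x).trans (hz (x * y))
    rwa [show (⟨(x * y * z, a, b), hΩ _⟩ : Ω) = ⟨(x * (y * z), a, b), hΩ _⟩ from
      Subtype.ext (by rw [mul_assoc])] at this
  | inv y _ hy =>
    intro x
    have := (hy (x * y⁻¹)).symm
    rwa [show (⟨(x * y⁻¹ * y, a, b), hΩ _⟩ : Ω) = ⟨(x, a, b), hΩ x⟩ from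
      Subtype.ext (by group)] at this


private lemma comp_eq (hgen : Subgroup.closure S' = ⊤) (K : Finset (VV H'))
    (C D : (GG S').ComponentCompl (↑K : Set (VV H')))
    (hC : C.supp.Infinite) (hD : D.supp.Infinite) : C = D := by
  classical
  obtain ⟨m, hm⟩ := Infinite.exists_notMem_finset (K.image (fun p => p.2.1))
  obtain ⟨n, hn⟩ := Infinite.exists_notMem_finset (K.image (fun p => p.2.2))
  have safeA : ∀ p : VV H', p.2.1 ∉ K.image (fun p => p.2.1) →
      p ∈ ((↑K : Set (VV H'))ᶜ) :=
    fun p hp hpK => hp (Finset.mem_image_of_mem _ hpK)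
  have safeB : ∀ p : VV H', p.2.2 ∉ K.image (fun p => p.2.2) →
      p ∈ ((↑K : Set (VV H'))ᶜ) :=
    fun p hp hpK => hp (Finset.mem_image_of_mem _ hpK)
  have safeF : ∀ p : VV H', p.1 ∉ K.image Prod.fst →
      p ∈ ((↑K : Set (VV H'))ᶜ) :=
    fun p hp hpK => hp (Finset.mem_image_of_mem _ hpK)
  have hu₀ : ((1 : H'), m, n) ∈ ((↑K : Set (VV H'))ᶜ) := safeA _ hm
  -- escape lemma, first from vertices whose `a`-coordinate avoids the image
  have esc1 : ∀ (h : H') (a b : Multiplicative ℤ)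
      (hmem : ((h, a, b) : VV H') ∈ ((↑K : Set (VV H'))ᶜ))
      (_ : a ∉ K.image (fun p => p.2.1)),
      ((GG S').induce ((↑K : Set (VV H'))ᶜ)).Reachable ⟨(h, a, b), hmem⟩
        ⟨((1 : H'), m, n), hu₀⟩ := by
    intro h a b hmem ha
    have r1 := reach_b (S' := S') ((↑K : Set (VV H'))ᶜ) h a
      (fun t => safeA (h, a, t) ha) b n
    have r2 := reach_a (S' := S') ((↑K : Set (VV H'))ᶜ) h n
      (fun t => safeB (h, t, n) hn) a m
    have r3 := reach_h hgen ((↑K : Set (VV H'))ᶜ) m n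
      (fun x => safeA (x, m, n) hm) h⁻¹ h
    rw [show (⟨(h * h⁻¹, m, n), safeA _ hm⟩ : ((↑K : Set (VV H'))ᶜ : Set (VV H'))) =
      ⟨((1 : H'), m, n), hu₀⟩ from Subtype.ext (by rw [mul_inv_cancel])] at r3
    exact r1.trans (r2.trans r3)
  have esc : ∀ (q : VV H') (hq : q ∈ ((↑K : Set (VV H'))ᶜ)),
      (q.1 ∉ K.image Prod.fst ∨ q.2.1 ∉ K.image (fun p => p.2.1) ∨
        q.2.2 ∉ K.image (fun p => p.2.2)) →
      ((GG S').induce ((↑K : Set (VV H'))ᶜ)).Reachable ⟨q, hq⟩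
        ⟨((1 : H'), m, n), hu₀⟩ := by
    rintro ⟨h, a, b⟩ hq (hF | hA | hB)
    · exact (reach_a (S' := S') _ h b (fun t => safeF (h, t, b) hF) a m).trans
        (esc1 h m b (safeA _ hm) hm)
    · exact esc1 h a b hq hA
    · exact (reach_a (S' := S') _ h b (fun t => safeB (h, t, b) hB) a m).trans
        (esc1 h m b (safeA _ hm) hm)
  -- every infinite component contains a vertex from which we can escape
  have key : ∀ (E : (GG S').ComponentCompl (↑K : Set (VV H'))), E.supp.Infinite →
      E = (GG S').componentComplMk hu₀ := by
    intro E hE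
    obtain ⟨q, hqE, hq'⟩ := Set.not_subset.mp
      (fun hsub => hE (Set.Finite.subset
        ((K.image Prod.fst) ×ˢ (K.image (fun p => p.2.1)) ×ˢ
          (K.image (fun p => p.2.2))).finite_toSet hsub))
    have hq'' : q.1 ∉ K.image Prod.fst ∨ q.2.1 ∉ K.image (fun p => p.2.1) ∨
        q.2.2 ∉ K.image (fun p => p.2.2) := by
      by_contra hc
      push_neg at hc
      exact hq' (by
        simp only [Finset.coe_product, Set.mem_prod]
        exact ⟨hc.1, hc.2.1, hc.2.2⟩)
    obtain ⟨hqK, hqmk⟩ := hqE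
    rw [← hqmk]
    exact SimpleGraph.ConnectedComponent.sound (esc q hqK hq'')
  rw [key C hC, key D hD]

private lemma end_supp_inf {W : Type*} (G : SimpleGraph W)
    (e : (j : (Finset W)ᵒᵖ) → G.componentComplFunctor.obj j) (he : e ∈ G.end)
    (K : (Finset W)ᵒᵖ) : (e K).supp.Infinite := by
  refine (SimpleGraph.ComponentCompl.infinite_iff_in_all_ranges (e K)).mpr fun L h => ?_
  exact ⟨e (Opposite.op L), he (CategoryTheory.opHomOfLE h)⟩

private theorem main (H' : Type*) [Group H'] (S' : Set H') (hfin : S'.Finite)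
    (hgen : Subgroup.closure S' = ⊤) : ∃! e, e ∈ (GG S').end := by
  classical
  -- local finiteness
  have hSfin : (SS S').Finite := by
    refine Set.Finite.union ?_ ((Set.finite_singleton _).insert _)
    have : {p : VV H' | ∃ s' ∈ S', p = (s', Multiplicative.ofAdd 0, Multiplicative.ofAdd 0)} =
        (fun s' => ((s' : H'), Multiplicative.ofAdd (0 : ℤ), Multiplicative.ofAdd (0 : ℤ))) '' S' := by
      ext p
      simp only [Set.mem_setOf_eq, Set.mem_image]
      exact ⟨fun ⟨s, hs, hp⟩ => ⟨s, hs, hp.symm⟩, fun ⟨s, hs, hp⟩ => ⟨s, hs, hp.symm⟩⟩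
    rw [this]
    exact hfin.image _
  haveI : LocallyFinite (GG S') := by
    intro v
    refine Set.Finite.fintype (Set.Finite.subset ((hSfin.union hSfin.inv).image (fun s => v * s)) ?_)
    rintro w ⟨hne, hw⟩
    exact ⟨v⁻¹ * w, hw, by group⟩
  -- preconnectedness
  have hpc : (GG S').Preconnected := by
    rintro ⟨h, a, b⟩ ⟨h', a', b'⟩
    have r1 := reach_h (S' := S') hgen Set.univ a b (fun _ => trivial) (h⁻¹ * h') h
    rw [show (⟨(h * (h⁻¹ * h'), a, b), trivial⟩ : (Set.univ : Set (VV H'))) =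
      ⟨(h', a, b), trivial⟩ from Subtype.ext (by rw [mul_inv_cancel_left])] at r1
    have r2 := reach_a (S' := S') Set.univ h' b (fun _ => trivial) a a'
    have r3 := reach_b (S' := S') Set.univ h' a' (fun _ => trivial) b b'
    have := (r1.trans (r2.trans r3)).map (SimpleGraph.Embedding.induce Set.univ).toHom
    exact this
  haveI : Fact (GG S').Preconnected := ⟨hpc⟩
  haveI : Infinite (VV H') := by infer_instance
  haveI : ∀ j : (Finset (VV H'))ᵒᵖ, Finite ((GG S').componentComplFunctor.obj j) :=
    fun j => SimpleGraph.componentCompl_finite (G := GG S') j.unop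
  haveI : ∀ j : (Finset (VV H'))ᵒᵖ, Nonempty ((GG S').componentComplFunctor.obj j) :=
    fun j => SimpleGraph.componentCompl_nonempty_of_infinite (GG S') j.unop
  obtain ⟨e, he⟩ := nonempty_sections_of_finite_inverse_system (GG S').componentComplFunctor
  refine ⟨e, he, ?_⟩
  intro e' he'
  have uniq : ∀ (f g : (j : (Finset (VV H'))ᵒᵖ) → (GG S').componentComplFunctor.obj j),
      f ∈ (GG S').end → g ∈ (GG S').end → f = g := by
    intro f g hf hg
    funext j
    exact comp_eq hgen j.unop (f j) (g j) (end_supp_inf _ f hf j) (end_supp_inf _ g hg j)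
  exact uniq e' e he' he

end CayleyOneEndedAux


/-- If `S'` is a finite generating set of `H'`, then the Cayley graph of
`H := H' × ℤ × ℤ` with respect to `S := {(s',0,0) | s' ∈ S'} ∪ {(e,1,0), (e,0,1)}`
is one-ended: its space of ends has exactly one element. -/
theorem cayleyGraph_one_ended (H' : Type*) [Group H'] (S' : Set H')
    (hfin : S'.Finite) (hgen : Subgroup.closure S' = ⊤) :
    ∃! e, e ∈ (cayleyGraph (H' × Multiplicative ℤ × Multiplicative ℤ)
      ({p : H' × Multiplicative ℤ × Multiplicative ℤ |
          ∃ s' ∈ S', p = (s', Multiplicative.ofAdd 0, Multiplicative.ofAdd 0)} ∪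
        {(1, Multiplicative.ofAdd 1, Multiplicative.ofAdd 0),
         (1, Multiplicative.ofAdd 0, Multiplicative.ofAdd 1)})).end := by
  exact CayleyOneEndedAux.main H' S' hfin hgen
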